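/- If p = p(n) satisfies p(n)·n^{8/15} → 0 as n → ∞, then asymptotically almost surely every triangle collection C contained as a subgraph in the random graph G ~ G_{n,p} satisfies m(C) < 15/8. -/

import Mathlib

namespace TournamentGame

variable {V : Type*} [DecidableEq V]

/-- The underlying undirected edges of a set of oriented edges. -/
def undirect (M : Finset (V × V)) : Finset (Sym2 V) :=
  M.image fun p => s(p.1, p.2)

/-- `MakerWin X F b M B` : in the (1:b) Maker-Breaker game on board `X`, with Maker
having claimed `M`, Breaker having claimed `B`, and Maker to move, Maker has a strategy
to claim all edges of some winning set (i.e. reach a position with `F` on her edges). -/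
inductive MakerWin (X : Finset (Sym2 V)) (F : Finset (Sym2 V) → Prop) (b : ℕ) :
    Finset (Sym2 V) → Finset (Sym2 V) → Prop
  | win (M B : Finset (Sym2 V)) : F M → MakerWin X F b M B
  | move (M B : Finset (Sym2 V)) (e : Sym2 V) (heX : e ∈ X) (hefree : e ∉ M ∪ B)
      (h : ∀ B' : Finset (Sym2 V), B' ⊆ X \ (insert e M ∪ B) →
        B'.card = min b (X \ (insert e M ∪ B)).card →
        MakerWin X F b (insert e M) (B ∪ B')) :
      MakerWin X F b M B

/-- `BreakerBlock X F b M B` : Maker to move; Breaker has a strategy ensuring that `F`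
never holds on Maker's edge set. -/
inductive BreakerBlock (X : Finset (Sym2 V)) (F : Finset (Sym2 V) → Prop) (b : ℕ) :
    Finset (Sym2 V) → Finset (Sym2 V) → Prop
  | step (M B : Finset (Sym2 V)) (hF : ¬ F M) (resp : Sym2 V → Finset (Sym2 V))
      (hsub : ∀ e ∈ X, e ∉ M ∪ B → resp e ⊆ X \ (insert e M ∪ B))
      (hcard : ∀ e ∈ X, e ∉ M ∪ B → (resp e).card = min b (X \ (insert e M ∪ B)).card)
      (h : ∀ e ∈ X, e ∉ M ∪ B → BreakerBlock X F b (insert e M) (B ∪ resp e)) :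
      BreakerBlock X F b M B

/-- Oriented (tournament-game) version of `MakerWin`: Maker claims an edge together with
an orientation; her position is a set of oriented edges. -/
inductive OMakerWin (X : Finset (Sym2 V)) (F : Finset (V × V) → Prop) (b : ℕ) :
    Finset (V × V) → Finset (Sym2 V) → Prop
  | win (M : Finset (V × V)) (B : Finset (Sym2 V)) : F M → OMakerWin X F b M B
  | move (M : Finset (V × V)) (B : Finset (Sym2 V)) (x y : V)
      (heX : s(x, y) ∈ X) (hefree : s(x, y) ∉ undirect M ∪ B)
      (h : ∀ B' : Finset (Sym2 V), B' ⊆ X \ (insert s(x, y) (undirect M) ∪ B) →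
        B'.card = min b (X \ (insert s(x, y) (undirect M) ∪ B)).card →
        OMakerWin X F b (insert (x, y) M) (B ∪ B')) :
      OMakerWin X F b M B

/-- Oriented version of `BreakerBlock`. -/
inductive OBreakerBlock (X : Finset (Sym2 V)) (F : Finset (V × V) → Prop) (b : ℕ) :
    Finset (V × V) → Finset (Sym2 V) → Prop
  | step (M : Finset (V × V)) (B : Finset (Sym2 V)) (hF : ¬ F M)
      (resp : V → V → Finset (Sym2 V))
      (hsub : ∀ x y : V, s(x, y) ∈ X → s(x, y) ∉ undirect M ∪ B →
        resp x y ⊆ X \ (insert s(x, y) (undirect M) ∪ B))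
      (hcard : ∀ x y : V, s(x, y) ∈ X → s(x, y) ∉ undirect M ∪ B →
        (resp x y).card = min b (X \ (insert s(x, y) (undirect M) ∪ B)).card)
      (h : ∀ x y : V, s(x, y) ∈ X → s(x, y) ∉ undirect M ∪ B →
        OBreakerBlock X F b (insert (x, y) M) (B ∪ resp x y)) :
      OBreakerBlock X F b M B

/-- Position with Breaker to move, in the unoriented game: Breaker can respond and
then keep blocking forever. -/
def BreakerTurn (X : Finset (Sym2 V)) (F : Finset (Sym2 V) → Prop) (b : ℕ)
    (M B : Finset (Sym2 V)) : Prop :=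
  ¬ F M ∧ ∃ B' : Finset (Sym2 V), B' ⊆ X \ (M ∪ B) ∧
    B'.card = min b (X \ (M ∪ B)).card ∧ BreakerBlock X F b M (B ∪ B')

/-- Position with Breaker to move, in the oriented game. -/
def OBreakerTurn (X : Finset (Sym2 V)) (F : Finset (V × V) → Prop) (b : ℕ)
    (M : Finset (V × V)) (B : Finset (Sym2 V)) : Prop :=
  ¬ F M ∧ ∃ B' : Finset (Sym2 V), B' ⊆ X \ (undirect M ∪ B) ∧
    B'.card = min b (X \ (undirect M ∪ B)).card ∧ OBreakerBlock X F b M (B ∪ B')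

/-- Winning sets of the triangle game. -/
def HasTriangle (M : Finset (Sym2 V)) : Prop :=
  ∃ x y z : V, x ≠ y ∧ y ≠ z ∧ x ≠ z ∧ s(x, y) ∈ M ∧ s(y, z) ∈ M ∧ s(x, z) ∈ M

/-- Maker's oriented edges contain a cyclic (directed) triangle. -/
def HasCyclicTriangle (M : Finset (V × V)) : Prop :=
  ∃ x y z : V, x ≠ y ∧ y ≠ z ∧ x ≠ z ∧ (x, y) ∈ M ∧ (y, z) ∈ M ∧ (z, x) ∈ M

/-- Maker's oriented edges contain an acyclic (transitive) triangle. -/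
def HasAcyclicTriangle (M : Finset (V × V)) : Prop :=
  ∃ x y z : V, x ≠ y ∧ y ≠ z ∧ x ≠ z ∧ (x, y) ∈ M ∧ (y, z) ∈ M ∧ (x, z) ∈ M

/-- A tournament on `Fin k`, given by its arc relation. -/
def IsTournament {k : ℕ} (T : Fin k → Fin k → Prop) : Prop :=
  (∀ i, ¬ T i i) ∧ ∀ i j : Fin k, i ≠ j → (T i j ↔ ¬ T j i)

/-- Maker's oriented edges contain a copy of the tournament `T`. -/
def HasTCopy {k : ℕ} (T : Fin k → Fin k → Prop) (M : Finset (V × V)) : Prop :=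
  ∃ f : Fin k → V, Function.Injective f ∧ ∀ i j : Fin k, T i j → (f i, f j) ∈ M

/-- The edge set of the complete graph `K_n`. -/
def completeEdges (n : ℕ) : Finset (Sym2 (Fin n)) :=
  Finset.univ.filter fun e => ¬ e.IsDiag

/-- The edge set of the Turán graph `T_{n,k}` : classes are residues mod `k`. -/
def turanEdges (n k : ℕ) : Finset (Sym2 (Fin n)) :=
  Finset.univ.filter fun e => ¬ (e.map fun v : Fin n => v.val % k).IsDiag

/-- `A` contains a good copy of `K_k` (all vertices in distinct classes of `T_{n,k}`). -/
def GoodCopy (n k : ℕ) (A : Finset (Sym2 (Fin n))) : Prop :=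
  ∃ f : Fin k → Fin n, Function.Injective f ∧
    (∀ i j : Fin k, i ≠ j → (f i).val % k ≠ (f j).val % k) ∧
    (∀ i j : Fin k, i ≠ j → s(f i, f j) ∈ A)

open Classical in
/-- Probability that a `p`-random subset `A` of `E` (each element kept independently with
probability `p`) satisfies `P`. This is the model `G(E, p)`. -/
noncomputable def edgeProb {α : Type*} [DecidableEq α] (E : Finset α) (p : ℝ)
    (P : Finset α → Prop) : ℝ :=
  ∑ A ∈ E.powerset, if P A then p ^ A.card * (1 - p) ^ (E.card - A.card) else 0

open Classical in
/-- Probability that a uniformly random `M`-element subset of `E` satisfies `P`.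
This is the model `G(E, M)`. -/
noncomputable def uniformProb {α : Type*} [DecidableEq α] (E : Finset α) (M : ℕ)
    (P : Finset α → Prop) : ℝ :=
  ((E.powerset.filter fun A => A.card = M ∧ P A).card : ℝ) /
    ((E.powerset.filter fun A => A.card = M).card : ℝ)

/-- The three edges of a triangle on `x`, `y`, `z`. -/
def triEdges (x y z : V) : Finset (Sym2 V) := {s(x, y), s(y, z), s(x, z)}

/-- `x`, `y`, `z` form a triangle of the graph with edge set `A`. -/
def IsTriangleIn (A : Finset (Sym2 V)) (x y z : V) : Prop :=
  x ≠ y ∧ y ≠ z ∧ x ≠ z ∧ s(x, y) ∈ A ∧ s(y, z) ∈ A ∧ s(x, z) ∈ A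

/-- The triangles of `A`, each recorded as its set of three edges: the vertex set of `T_A`. -/
def TriSets (A : Finset (Sym2 V)) : Set (Finset (Sym2 V)) :=
  {t | ∃ x y z : V, IsTriangleIn A x y z ∧ t = triEdges x y z}

/-- `C` is a triangle collection: every edge lies in a triangle and the graph `T_C` of
triangles (adjacent iff sharing an edge) is connected. -/
def IsTriangleCollection (C : Finset (Sym2 V)) : Prop :=
  (∀ e ∈ C, ∃ x y z : V, IsTriangleIn C x y z ∧ e ∈ triEdges x y z) ∧
  ∀ t ∈ TriSets C, ∀ t' ∈ TriSets C,
    Relation.ReflTransGen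
      (fun a b => a ∈ TriSets C ∧ b ∈ TriSets C ∧ (a ∩ b).Nonempty) t t'

/-- Adjacency of `K₃⁺`: a triangle on `{0,1,2}` with a pendant edge `{2,3}`. -/
def K3plusAdj (a b : Fin 4) : Prop :=
  (a.val < 3 ∧ b.val < 3 ∧ a ≠ b) ∨ (a.val = 2 ∧ b.val = 3) ∨ (a.val = 3 ∧ b.val = 2)

/-- Adjacency of the path on `Fin m`. -/
def pathAdj {m : ℕ} (a b : Fin m) : Prop := a.val + 1 = b.val ∨ b.val + 1 = a.val

/-- `C` is very basic: `T_C` is (isomorphic to) a subgraph of `K₃⁺` or of a path `P_m`. -/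
def VeryBasic (C : Finset (Sym2 V)) : Prop :=
  (∃ φ : TriSets C → Fin 4, Function.Injective φ ∧
    ∀ t t' : TriSets C, t ≠ t' → ((t : Finset (Sym2 V)) ∩ (t' : Finset (Sym2 V))).Nonempty →
      K3plusAdj (φ t) (φ t')) ∨
  (∃ m : ℕ, ∃ φ : TriSets C → Fin m, Function.Injective φ ∧
    ∀ t t' : TriSets C, t ≠ t' → ((t : Finset (Sym2 V)) ∩ (t' : Finset (Sym2 V))).Nonempty →
      pathAdj (φ t) (φ t'))

/-- `C` is basic: there are distinct edges `e₁, e₂` with `C - eᵢ` very basic for both. -/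
def Basic (C : Finset (Sym2 V)) : Prop :=
  ∃ e₁ ∈ C, ∃ e₂ ∈ C, e₁ ≠ e₂ ∧ VeryBasic (C.erase e₁) ∧ VeryBasic (C.erase e₂)

open Classical in
/-- The set of non-isolated vertices of the graph with edge set `C`. -/
noncomputable def support [Fintype V] (C : Finset (Sym2 V)) : Finset V :=
  Finset.univ.filter fun v => ∃ e ∈ C, v ∈ e

open Classical in
/-- Degree of `v` in the graph with edge set `C`. -/
noncomputable def degreeIn (C : Finset (Sym2 V)) (v : V) : ℕ :=
  (C.filter fun e => v ∈ e).card

/-- The maximum density `m(C) = max_{H ⊆ C} e(H)/v(H)` is (strictly) less than `r`. -/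
def MaxDensityLt [Fintype V] (C : Finset (Sym2 V)) (r : ℝ) : Prop :=
  ∀ D ⊆ C, D.Nonempty → (D.card : ℝ) / ((support D).card : ℝ) < r

/-- The edge set of the `k`-wheel: a cycle on `{0, …, k-1} ⊆ Fin (k+1)` together with
all edges to the center, the vertex `k`. -/
def wheelEdges (k : ℕ) : Finset (Sym2 (Fin (k + 1))) :=
  ((Finset.univ : Finset (Fin k)).image fun i =>
    s((⟨i.val, by have := i.2; omega⟩ : Fin (k + 1)),
      (⟨(i.val + 1) % k, by have := i.2; exact Nat.lt_succ_of_lt (Nat.mod_lt _ (by omega))⟩ :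
        Fin (k + 1)))) ∪
  ((Finset.univ : Finset (Fin k)).image fun i =>
    s((⟨i.val, by have := i.2; omega⟩ : Fin (k + 1)), (Fin.last k)))

section AuxProof
variable [Fintype V]

lemma mem_support {C : Finset (Sym2 V)} {v : V} : v ∈ support C ↔ ∃ e ∈ C, v ∈ e := by
  simp [support]

lemma mem_support_of_mem {C : Finset (Sym2 V)} {g : Sym2 V} {v : V} (hg : g ∈ C) (hv : v ∈ g) :
    v ∈ support C := mem_support.2 ⟨g, hg, hv⟩

lemma not_mem_of_endpoint {C : Finset (Sym2 V)} {a b : V} (h : a ∉ support C) :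
    s(a, b) ∉ C := fun hc => h (mem_support_of_mem hc (by simp))

lemma support_union (A B : Finset (Sym2 V)) : support (A ∪ B) = support A ∪ support B := by
  ext v
  simp only [mem_support, Finset.mem_union]
  constructor
  · rintro ⟨e, h | h, hv⟩
    · exact Or.inl ⟨e, h, hv⟩
    · exact Or.inr ⟨e, h, hv⟩
  · rintro (⟨e, h, hv⟩ | ⟨e, h, hv⟩)
    · exact ⟨e, Or.inl h, hv⟩
    · exact ⟨e, Or.inr h, hv⟩

lemma support_insert (g : Sym2 V) (C : Finset (Sym2 V)) :
    support (insert g C) = support {g} ∪ support C := by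
  rw [← support_union]
  congr 1

lemma support_triEdges (x y z : V) :
    support (triEdges x y z) = {x, y, z} := by
  ext v
  simp only [mem_support, triEdges, Finset.mem_insert, Finset.mem_singleton]
  constructor
  · rintro ⟨e, (rfl | rfl | rfl), hv⟩ <;> simp at hv <;> tauto
  · rintro (h | h | h)
    · exact ⟨s(x, y), by simp, by simp [h]⟩
    · exact ⟨s(x, y), by simp, by simp [h]⟩
    · exact ⟨s(x, z), by simp, by simp [h]⟩

lemma card_support_triEdges {x y z : V} (hxy : x ≠ y) (hyz : y ≠ z) (hxz : x ≠ z) :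
    (support (triEdges x y z)).card = 3 := by
  rw [support_triEdges x y z]
  rw [Finset.card_insert_of_notMem (by simp [hxy, hxz]),
    Finset.card_insert_of_notMem (by simp [hyz])]
  simp

omit [Fintype V] in
lemma card_triEdges {x y z : V} (hxy : x ≠ y) (hyz : y ≠ z) (hxz : x ≠ z) :
    (triEdges x y z).card = 3 := by
  rw [triEdges, Finset.card_insert_of_notMem, Finset.card_insert_of_notMem] <;>
    simp [Sym2.eq_iff] <;> tauto


/-- Key potential: `8 * e(D) - 15 * v(D)`, as an integer. -/
noncomputable def pot (D : Finset (Sym2 V)) : ℤ := 8 * D.card - 15 * (support D).card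

/-- Lemma A: a triangle collection containing a dense subgraph is itself dense. -/
lemma lemA (C : Finset (Sym2 V)) (hC : IsTriangleCollection C)
    (D0 : Finset (Sym2 V)) (hD0 : D0 ⊆ C) (hne : D0.Nonempty)
    (hdense : 15 * (support D0).card ≤ 8 * D0.card) :
    15 * (support C).card ≤ 8 * C.card := by
  classical
  -- maximize k(D) over D ⊆ C
  set k : Finset (Sym2 V) → ℤ := fun D => (C.card + 1) * pot D + D.card with hk
  obtain ⟨D, hDmem, hDmax⟩ := Finset.exists_max_image C.powerset k ⟨D0, Finset.mem_powerset.2 hD0⟩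
  have hDC : D ⊆ C := Finset.mem_powerset.1 hDmem
  have hkD0 : (1 : ℤ) ≤ k D := by
    have hle := hDmax D0 (Finset.mem_powerset.2 hD0)
    have hpos : (0 : ℤ) ≤ pot D0 := by
      simp only [pot]
      push_cast
      omega
    have h2 : (0:ℤ) ≤ (C.card + 1) * pot D0 := mul_nonneg (by positivity) hpos
    have h3 : (1 : ℤ) ≤ (D0.card : ℤ) := by
      exact_mod_cast Finset.card_pos.2 hne
    simp only [hk] at hle ⊢
    linarith
  -- D is nonempty
  have hDne : D.Nonempty := by
    rcases Finset.eq_empty_or_nonempty D with rfl | h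
    · exfalso
      simp only [hk, pot, support] at hkD0
      simp at hkD0
    · exact h
  -- potential of D is nonnegative
  have hpotD : 0 ≤ pot D := by
    by_contra hneg
    push_neg at hneg
    have hle : pot D ≤ -1 := by omega
    have hcard : (D.card : ℤ) ≤ C.card := by exact_mod_cast Finset.card_le_card hDC
    have : k D ≤ -1 := by
      have : (C.card + 1 : ℤ) * pot D ≤ (C.card + 1) * (-1) := by
        apply mul_le_mul_of_nonneg_left hle
        positivity
      simp only [hk]
      linarith
    linarith
  -- (b) edge closure
  have hedge : ∀ g ∈ C, (∀ x ∈ g, x ∈ support D) → g ∈ D := by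
    intro g hgC hgsupp
    by_contra hgD
    have hsub : insert g D ∈ C.powerset :=
      Finset.mem_powerset.2 (Finset.insert_subset hgC hDC)
    have hsupp : support (insert g D) = support D := by
      apply Finset.Subset.antisymm
      · rw [support_insert]
        apply Finset.union_subset _ Finset.Subset.rfl
        intro v hv
        rw [mem_support] at hv
        obtain ⟨e, he, hv⟩ := hv
        simp at he
        subst he
        exact hgsupp v hv
      · rw [support_insert]
        exact Finset.subset_union_right
    have hcard : (insert g D).card = D.card + 1 := Finset.card_insert_of_notMem hgD
    have : k (insert g D) = k D + ((C.card + 1) * 8 + 1) := by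
      simp only [hk, pot, hsupp, hcard]
      push_cast
      ring
    have hle := hDmax _ hsub
    have : (0:ℤ) < (C.card + 1) * 8 + 1 := by positivity
    omega
  -- (c) no outside vertex with two edges into the support
  have hout : ∀ u x y : V, u ∉ support D → x ∈ support D → y ∈ support D →
      u ≠ x → u ≠ y → x ≠ y → s(u, x) ∈ C → s(u, y) ∈ C → False := by
    intro u x y hu hx hy hux huy hxy h1 h2
    have hd1 : s(u, x) ∉ D := not_mem_of_endpoint hu
    have hd2 : s(u, y) ∉ D := not_mem_of_endpoint hu
    have hne12 : s(u, x) ≠ s(u, y) := by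
      rw [Ne, Sym2.eq_iff]
      rintro (⟨-, h⟩ | ⟨h1', h2'⟩)
      · exact hxy h
      · exact hux h2'.symm
    set D' : Finset (Sym2 V) := insert s(u, x) (insert s(u, y) D) with hD'
    have hsub : D' ∈ C.powerset := by
      rw [Finset.mem_powerset, hD']
      exact Finset.insert_subset h1 (Finset.insert_subset h2 hDC)
    have hcard : D'.card = D.card + 2 := by
      rw [hD', Finset.card_insert_of_notMem, Finset.card_insert_of_notMem hd2]
      simp only [Finset.mem_insert]
      push_neg
      exact ⟨hne12, hd1⟩
    have hsupp : support D' = insert u (support D) := by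
      rw [hD', support_insert, support_insert]
      ext v
      simp only [Finset.mem_union, Finset.mem_insert, mem_support, Finset.mem_singleton,
        exists_eq_left, Sym2.mem_iff]
      constructor
      · rintro ((h | h) | (h | h) | h)
        · exact Or.inl h
        · exact Or.inr (h ▸ mem_support.1 hx)
        · exact Or.inl h
        · exact Or.inr (h ▸ mem_support.1 hy)
        · exact Or.inr h
      · rintro (h | h)
        · exact Or.inl (Or.inl h)
        · exact Or.inr (Or.inr h)
    have hsuppcard : (support D').card = (support D).card + 1 := by
      rw [hsupp, Finset.card_insert_of_notMem hu]
    have : k D' = k D + ((C.card + 1) * 1 + 2) := by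
      simp only [hk, pot, hcard, hsuppcard]
      push_cast
      ring
    have hle := hDmax _ hsub
    have : (0:ℤ) < (C.card + 1) * 1 + 2 := by positivity
    omega
  -- (e) if one edge of a triangle of C is in D, the whole triangle is in D
  have htri : ∀ x y z : V, IsTriangleIn C x y z →
      (s(x, y) ∈ D ∨ s(y, z) ∈ D ∨ s(x, z) ∈ D) → triEdges x y z ⊆ D := by
    intro x y z ht hsome
    obtain ⟨hxy, hyz, hxz, e1, e2, e3⟩ := ht
    have hvert : x ∈ support D ∧ y ∈ support D ∧ z ∈ support D := by
      rcases hsome with h | h | h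
      · have hx : x ∈ support D := mem_support_of_mem h (by simp)
        have hy : y ∈ support D := mem_support_of_mem h (by simp)
        have hz : z ∈ support D := by
          by_contra hz
          exact hout z x y hz hx hy (Ne.symm hxz) (Ne.symm hyz) hxy
            (Sym2.eq_swap ▸ e3) (Sym2.eq_swap ▸ e2)
        exact ⟨hx, hy, hz⟩
      · have hy : y ∈ support D := mem_support_of_mem h (by simp)
        have hz : z ∈ support D := mem_support_of_mem h (by simp)
        have hx : x ∈ support D := by
          by_contra hx
          exact hout x y z hx hy hz hxy hxz hyz e1 e3
        exact ⟨hx, hy, hz⟩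
      · have hx : x ∈ support D := mem_support_of_mem h (by simp)
        have hz : z ∈ support D := mem_support_of_mem h (by simp)
        have hy : y ∈ support D := by
          by_contra hy
          exact hout y x z hy hx hz (Ne.symm hxy) hyz hxz (Sym2.eq_swap ▸ e1) e2
        exact ⟨hx, hy, hz⟩
    intro g hg
    simp only [triEdges, Finset.mem_insert, Finset.mem_singleton] at hg
    rcases hg with h | h | h
    · refine h ▸ hedge _ e1 ?_
      intro v hv
      simp only [Sym2.mem_iff] at hv
      rcases hv with h' | h'
      · exact h' ▸ hvert.1
      · exact h' ▸ hvert.2.1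
    · refine h ▸ hedge _ e2 ?_
      intro v hv
      simp only [Sym2.mem_iff] at hv
      rcases hv with h' | h'
      · exact h' ▸ hvert.2.1
      · exact h' ▸ hvert.2.2
    · refine h ▸ hedge _ e3 ?_
      intro v hv
      simp only [Sym2.mem_iff] at hv
      rcases hv with h' | h'
      · exact h' ▸ hvert.1
      · exact h' ▸ hvert.2.2
  -- (d) an internal triangle
  obtain ⟨g0, hg0⟩ := hDne
  obtain ⟨x0, y0, z0, ht0, hg0t⟩ := hC.1 g0 (hDC hg0)
  have ht0D : triEdges x0 y0 z0 ⊆ D := by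
    apply htri _ _ _ ht0
    simp only [triEdges, Finset.mem_insert, Finset.mem_singleton] at hg0t
    rcases hg0t with h | h | h
    · exact Or.inl (h ▸ hg0)
    · exact Or.inr (Or.inl (h ▸ hg0))
    · exact Or.inr (Or.inr (h ▸ hg0))
  -- propagation along the connectivity relation
  have hprop : ∀ t' : Finset (Sym2 V),
      Relation.ReflTransGen
        (fun a b => a ∈ TriSets C ∧ b ∈ TriSets C ∧ (a ∩ b).Nonempty)
        (triEdges x0 y0 z0) t' → t' ⊆ D := by
    intro t' hchain
    induction hchain with
    | refl => exact ht0D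
    | tail _ hrel ih =>
      obtain ⟨ha, hb, hshare⟩ := hrel
      obtain ⟨x, y, z, ht, rfl⟩ := hb
      obtain ⟨g, hg⟩ := hshare
      have hgD : g ∈ D := ih (Finset.mem_inter.1 hg).1
      have hgt : g ∈ triEdges x y z := (Finset.mem_inter.1 hg).2
      apply htri _ _ _ ht
      simp only [triEdges, Finset.mem_insert, Finset.mem_singleton] at hgt
      rcases hgt with h | h | h
      · exact Or.inl (h ▸ hgD)
      · exact Or.inr (Or.inl (h ▸ hgD))
      · exact Or.inr (Or.inr (h ▸ hgD))
  -- conclusion: C = D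
  have hCD : C ⊆ D := by
    intro g hg
    obtain ⟨x, y, z, ht, hgt⟩ := hC.1 g hg
    have htm : triEdges x y z ∈ TriSets C := ⟨x, y, z, ht, rfl⟩
    have ht0m : triEdges x0 y0 z0 ∈ TriSets C := ⟨x0, y0, z0, ht0, rfl⟩
    exact hprop _ (hC.2 _ ht0m _ htm) hgt
  have hDCeq : D = C := Finset.Subset.antisymm hDC hCD
  rw [hDCeq] at hpotD
  simp only [pot] at hpotD
  omega

lemma triEdges_rotate (x y z : V) : triEdges y z x = triEdges x y z := by
  have h1 : s(z, x) = s(x, z) := Sym2.eq_swap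
  have h2 : s(y, x) = s(x, y) := Sym2.eq_swap
  unfold triEdges
  rw [h1, h2]
  ext g
  simp only [Finset.mem_insert, Finset.mem_singleton]
  tauto

lemma triEdges_swap (x y z : V) : triEdges x z y = triEdges x y z := by
  have h1 : s(z, y) = s(y, z) := Sym2.eq_swap
  unfold triEdges
  rw [h1]
  ext g
  simp only [Finset.mem_insert, Finset.mem_singleton]
  tauto

lemma grow (D : Finset (Sym2 V)) (x y z : V) (hxy : x ≠ y) (hyz : y ≠ z) (hxz : x ≠ z)
    (hsh : s(x, y) ∈ D) (hnsub : ¬ triEdges x y z ⊆ D) :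
    (support (D ∪ triEdges x y z)).card ≤ (support D).card + 1 ∧
    pot D + 1 ≤ pot (D ∪ triEdges x y z) := by
  classical
  have htD : (triEdges x y z \ D).Nonempty := by
    rw [Finset.sdiff_nonempty]
    exact hnsub
  have htcard : (triEdges x y z).card = 3 := card_triEdges hxy hyz hxz
  have hk2 : (triEdges x y z \ D).card ≤ 2 := by
    have hsub : triEdges x y z \ D ⊆ (triEdges x y z).erase s(x, y) := by
      intro g hg
      rw [Finset.mem_sdiff] at hg
      rw [Finset.mem_erase]
      refine ⟨?_, hg.1⟩
      rintro rfl
      exact hg.2 hsh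
    calc (triEdges x y z \ D).card ≤ ((triEdges x y z).erase s(x, y)).card :=
          Finset.card_le_card hsub
      _ = (triEdges x y z).card - 1 := Finset.card_erase_of_mem (by simp [triEdges])
      _ ≤ 2 := by omega
  have hcardD' : (D ∪ triEdges x y z).card = D.card + (triEdges x y z \ D).card := by
    rw [Finset.union_comm, ← Finset.card_sdiff_add_card]
    omega
  have hsupp' : support (D ∪ triEdges x y z) = support D ∪ {x, y, z} := by
    rw [support_union, support_triEdges]
  have hx : x ∈ support D := mem_support_of_mem hsh (by simp)
  have hy : y ∈ support D := mem_support_of_mem hsh (by simp)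
  by_cases hz : z ∈ support D
  · have hsuppeq : support (D ∪ triEdges x y z) = support D := by
      rw [hsupp']
      apply Finset.union_eq_left.2
      intro v hv
      simp only [Finset.mem_insert, Finset.mem_singleton] at hv
      rcases hv with h | h | h
      · exact h ▸ hx
      · exact h ▸ hy
      · exact h ▸ hz
    have h1 : 1 ≤ (triEdges x y z \ D).card := Finset.card_pos.2 htD
    constructor
    · rw [hsuppeq]; omega
    · simp only [pot, hcardD', hsuppeq]
      push_cast
      omega
  · have h1 : s(y, z) ∉ D := fun hc => hz (mem_support_of_mem hc (by simp))
    have h2 : s(x, z) ∉ D := fun hc => hz (mem_support_of_mem hc (by simp))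
    have hne12 : s(y, z) ≠ s(x, z) := by
      rw [Ne, Sym2.eq_iff]
      rintro (⟨h, -⟩ | ⟨h, h'⟩)
      · exact hxy h.symm
      · exact hyz h
    have hkge : 2 ≤ (triEdges x y z \ D).card := by
      have hsub2 : ({s(y, z), s(x, z)} : Finset (Sym2 V)) ⊆ triEdges x y z \ D := by
        intro g hg
        simp only [Finset.mem_insert, Finset.mem_singleton] at hg
        rw [Finset.mem_sdiff]
        rcases hg with h | h
        · exact ⟨h ▸ (by simp [triEdges]), h ▸ h1⟩
        · exact ⟨h ▸ (by simp [triEdges]), h ▸ h2⟩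
      calc 2 = ({s(y, z), s(x, z)} : Finset (Sym2 V)).card := by
            rw [Finset.card_insert_of_notMem (by simpa using hne12), Finset.card_singleton]
        _ ≤ _ := Finset.card_le_card hsub2
    have hkk : (triEdges x y z \ D).card = 2 := le_antisymm hk2 hkge
    have hsuppeq : support (D ∪ triEdges x y z) = insert z (support D) := by
      rw [hsupp']
      ext v
      simp only [Finset.mem_union, Finset.mem_insert, Finset.mem_singleton]
      constructor
      · rintro (h | h | h | h)
        · exact Or.inr h
        · exact Or.inr (h ▸ hx)
        · exact Or.inr (h ▸ hy)
        · exact Or.inl h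
      · rintro (h | h)
        · exact Or.inr (Or.inr (Or.inr h))
        · exact Or.inl h
    have hsc : (support (D ∪ triEdges x y z)).card = (support D).card + 1 := by
      rw [hsuppeq, Finset.card_insert_of_notMem hz]
    constructor
    · omega
    · simp only [pot, hcardD', hkk, hsc]
      push_cast
      omega

/-- Lemma B: a dense triangle collection contains a small dense subgraph. -/
lemma lemB (C : Finset (Sym2 V)) (hC : IsTriangleCollection C) (hne : C.Nonempty)
    (hdense : 15 * (support C).card ≤ 8 * C.card) :
    ∃ D ⊆ C, D.Nonempty ∧ (support D).card ≤ 24 ∧ 15 * (support D).card ≤ 8 * D.card := by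
  classical
  obtain ⟨g0, hg0⟩ := hne
  obtain ⟨x0, y0, z0, ht0, -⟩ := hC.1 g0 hg0
  obtain ⟨hxy0, hyz0, hxz0, f1, f2, f3⟩ := ht0
  have ht0C : triEdges x0 y0 z0 ⊆ C := by
    intro g hg
    simp only [triEdges, Finset.mem_insert, Finset.mem_singleton] at hg
    rcases hg with h | h | h
    · exact h ▸ f1
    · exact h ▸ f2
    · exact h ▸ f3
  have hpotC : (0 : ℤ) ≤ pot C := by
    simp only [pot]
    omega
  have hext : ∀ D : Finset (Sym2 V), D ⊆ C → triEdges x0 y0 z0 ⊆ D → D ≠ C →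
      ∃ x y z, IsTriangleIn C x y z ∧ (triEdges x y z ∩ D).Nonempty ∧
        ¬ triEdges x y z ⊆ D := by
    intro D hDC ht0D hneq
    obtain ⟨g, hgC, hgD⟩ : ∃ g, g ∈ C ∧ g ∉ D := by
      by_contra hcon
      push_neg at hcon
      exact hneq (Finset.Subset.antisymm hDC fun g hg => hcon g hg)
    obtain ⟨x, y, z, ht, hgt⟩ := hC.1 g hgC
    have htm : triEdges x y z ∈ TriSets C := ⟨x, y, z, ht, rfl⟩
    have ht0m : triEdges x0 y0 z0 ∈ TriSets C :=
      ⟨x0, y0, z0, ⟨hxy0, hyz0, hxz0, f1, f2, f3⟩, rfl⟩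
    have hchain := hC.2 _ ht0m _ htm
    have key : ∀ t' : Finset (Sym2 V),
        Relation.ReflTransGen
          (fun a b => a ∈ TriSets C ∧ b ∈ TriSets C ∧ (a ∩ b).Nonempty)
          (triEdges x0 y0 z0) t' →
        t' ⊆ D ∨ ∃ x y z, IsTriangleIn C x y z ∧ (triEdges x y z ∩ D).Nonempty ∧
          ¬ triEdges x y z ⊆ D := by
      intro t' hch
      induction hch with
      | refl => exact Or.inl ht0D
      | tail _ hrel ih =>
        rcases ih with hsub | hgoal
        · obtain ⟨ha, hb, hshare⟩ := hrel
          obtain ⟨a1, a2, a3, hta, rfl⟩ := hb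
          by_cases hsub' : triEdges a1 a2 a3 ⊆ D
          · exact Or.inl hsub'
          · obtain ⟨g', hg'⟩ := hshare
            exact Or.inr ⟨a1, a2, a3, hta,
              ⟨g', Finset.mem_inter.2 ⟨(Finset.mem_inter.1 hg').2,
                hsub (Finset.mem_inter.1 hg').1⟩⟩, hsub'⟩
        · exact Or.inr hgoal
    rcases key _ hchain with hsub | hgoal
    · exact absurd (hsub hgt) hgD
    · exact hgoal
  have main : ∀ i : ℕ,
      (∃ D ⊆ C, D.Nonempty ∧ (support D).card ≤ 24 ∧
        15 * (support D).card ≤ 8 * D.card) ∨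
      (∃ D, D ⊆ C ∧ triEdges x0 y0 z0 ⊆ D ∧ i ≤ 21 ∧
        (support D).card ≤ 3 + i ∧ (i : ℤ) - 21 ≤ pot D) := by
    intro i
    induction i with
    | zero =>
      right
      refine ⟨triEdges x0 y0 z0, ht0C, Finset.Subset.rfl, by omega, ?_, ?_⟩
      · rw [card_support_triEdges hxy0 hyz0 hxz0]
      · simp only [pot, card_support_triEdges hxy0 hyz0 hxz0, card_triEdges hxy0 hyz0 hxz0]
        omega
    | succ n ih =>
      rcases ih with h | ⟨D, hDC, ht0D, hn21, hsupp, hpot⟩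
      · exact Or.inl h
      · by_cases h0 : (0 : ℤ) ≤ pot D
        · left
          refine ⟨D, hDC, ⟨s(x0, y0), ht0D (by simp [triEdges])⟩, by omega, ?_⟩
          simp only [pot] at h0
          omega
        · push_neg at h0
          have hn20 : n ≤ 20 := by omega
          have hDneC : D ≠ C := by
            rintro rfl
            omega
          obtain ⟨x, y, z, ht, hshare, hnsub⟩ := hext D hDC ht0D hDneC
          obtain ⟨hxy, hyz, hxz, e1, e2, e3⟩ := ht
          obtain ⟨g, hg⟩ := hshare
          have hgt := (Finset.mem_inter.1 hg).1
          have hgD := (Finset.mem_inter.1 hg).2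
          simp only [triEdges, Finset.mem_insert, Finset.mem_singleton] at hgt
          have hcore : (support (D ∪ triEdges x y z)).card ≤ (support D).card + 1 ∧
              pot D + 1 ≤ pot (D ∪ triEdges x y z) := by
            rcases hgt with h | h | h
            · exact grow D x y z hxy hyz hxz (h ▸ hgD) hnsub
            · rw [← triEdges_rotate x y z]
              exact grow D y z x hyz (Ne.symm hxz) (Ne.symm hxy) (h ▸ hgD)
                (by rwa [triEdges_rotate])
            · rw [← triEdges_swap x y z]
              exact grow D x z y hxz (Ne.symm hyz) hxy (h ▸ hgD)
                (by rwa [triEdges_swap])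
          right
          have htriC : triEdges x y z ⊆ C := by
            intro g' hg'
            simp only [triEdges, Finset.mem_insert, Finset.mem_singleton] at hg'
            rcases hg' with h | h | h
            · exact h ▸ e1
            · exact h ▸ e2
            · exact h ▸ e3
          refine ⟨D ∪ triEdges x y z, Finset.union_subset hDC htriC,
            ht0D.trans Finset.subset_union_left, by omega, by omega, ?_⟩
          have := hcore.2
          push_cast
          omega
  rcases main 21 with h | ⟨D, hDC, ht0D, -, hsupp, hpot⟩
  · exact h
  · refine ⟨D, hDC, ⟨s(x0, y0), ht0D (by simp [triEdges])⟩, by omega, ?_⟩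
    simp only [pot] at hpot
    omega

section Prob

variable {α : Type*} [DecidableEq α]

lemma sum_weights (E : Finset α) (p : ℝ) :
    ∑ A ∈ E.powerset, p ^ A.card * (1 - p) ^ (E.card - A.card) = 1 := by
  classical
  have h := Finset.prod_add (fun _ : α => p) (fun _ : α => (1 - p)) E
  simp only [Finset.prod_const] at h
  have h2 : p + (1 - p) = 1 := by ring
  rw [h2, one_pow] at h
  refine Eq.trans ?_ h.symm
  apply Finset.sum_congr rfl
  intro A hA
  rw [Finset.card_sdiff_of_subset (Finset.mem_powerset.1 hA)]

lemma edgeProb_le_one (E : Finset α) (p : ℝ) (h0 : 0 ≤ p) (h1 : p ≤ 1)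
    (P : Finset α → Prop) : edgeProb E p P ≤ 1 := by
  classical
  rw [← sum_weights E p]
  unfold edgeProb
  apply Finset.sum_le_sum
  intro A _
  have hw : 0 ≤ p ^ A.card * (1 - p) ^ (E.card - A.card) :=
    mul_nonneg (pow_nonneg h0 _) (pow_nonneg (by linarith) _)
  split_ifs <;> simp [hw]

lemma sum_weights_superset (E S : Finset α) (hS : S ⊆ E) (p : ℝ) :
    ∑ A ∈ E.powerset,
      (if S ⊆ A then p ^ A.card * (1 - p) ^ (E.card - A.card) else 0) = p ^ S.card := by
  classical
  rw [← Finset.sum_filter]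
  have key : ∑ A ∈ E.powerset.filter (fun A => S ⊆ A),
        p ^ A.card * (1 - p) ^ (E.card - A.card)
      = ∑ B ∈ (E \ S).powerset,
        p ^ S.card * (p ^ B.card * (1 - p) ^ ((E \ S).card - B.card)) := by
    apply Finset.sum_bij' (fun A _ => A \ S) (fun B _ => B ∪ S)
    · intro A hA
      rw [Finset.mem_filter, Finset.mem_powerset] at hA
      rw [Finset.mem_powerset]
      exact Finset.sdiff_subset_sdiff hA.1 Finset.Subset.rfl
    · intro B hB
      rw [Finset.mem_powerset] at hB
      rw [Finset.mem_filter, Finset.mem_powerset]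
      refine ⟨Finset.union_subset (hB.trans Finset.sdiff_subset) hS, Finset.subset_union_right⟩
    · intro A hA
      rw [Finset.mem_filter] at hA
      exact Finset.sdiff_union_of_subset hA.2
    · intro B hB
      rw [Finset.mem_powerset] at hB
      exact Finset.union_sdiff_cancel_right
        (Finset.disjoint_of_subset_left hB Finset.sdiff_disjoint)
    · intro A hA
      rw [Finset.mem_filter, Finset.mem_powerset] at hA
      have hSA : S ⊆ A := hA.2
      have hAE : A ⊆ E := hA.1
      have hc1 : (A \ S).card = A.card - S.card := Finset.card_sdiff_of_subset hSA
      have hc2 : (E \ S).card = E.card - S.card := Finset.card_sdiff_of_subset hS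
      have hc3 : S.card ≤ A.card := Finset.card_le_card hSA
      have hc4 : A.card ≤ E.card := Finset.card_le_card hAE
      rw [hc1, hc2]
      have he1 : A.card = S.card + (A.card - S.card) := by omega
      have he2 : E.card - S.card - (A.card - S.card) = E.card - A.card := by omega
      rw [he2, ← mul_assoc, ← pow_add, ← he1]
  rw [key, ← Finset.mul_sum, sum_weights (E \ S) p, mul_one]

lemma one_sub_edgeProb_le (E : Finset α) (p : ℝ) (h0 : 0 ≤ p) (h1 : p ≤ 1)
    (P : Finset α → Prop) (𝒟 : Finset (Finset α)) (h𝒟 : ∀ S ∈ 𝒟, S ⊆ E)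
    (hcover : ∀ A ∈ E.powerset, ¬ P A → ∃ S ∈ 𝒟, S ⊆ A) :
    1 - edgeProb E p P ≤ ∑ S ∈ 𝒟, p ^ S.card := by
  classical
  have hw : ∀ A : Finset α, 0 ≤ p ^ A.card * (1 - p) ^ (E.card - A.card) :=
    fun A => mul_nonneg (pow_nonneg h0 _) (pow_nonneg (by linarith) _)
  have key : ∑ A ∈ E.powerset,
        (if P A then 0 else p ^ A.card * (1 - p) ^ (E.card - A.card))
      = 1 - edgeProb E p P := by
    unfold edgeProb
    have hterm : ∀ A ∈ E.powerset,
        (if P A then 0 else p ^ A.card * (1 - p) ^ (E.card - A.card))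
        = p ^ A.card * (1 - p) ^ (E.card - A.card)
          - (if P A then p ^ A.card * (1 - p) ^ (E.card - A.card) else 0) := by
      intro A _
      split_ifs <;> ring
    rw [Finset.sum_congr rfl hterm, Finset.sum_sub_distrib, sum_weights]
  rw [← key]
  have step1 : ∑ A ∈ E.powerset,
        (if P A then 0 else p ^ A.card * (1 - p) ^ (E.card - A.card))
      ≤ ∑ A ∈ E.powerset, ∑ S ∈ 𝒟,
          (if S ⊆ A then p ^ A.card * (1 - p) ^ (E.card - A.card) else 0) := by
    apply Finset.sum_le_sum
    intro A hA
    split_ifs with hPA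
    · apply Finset.sum_nonneg
      intro S _
      split_ifs
      · exact hw A
      · exact le_refl 0
    · obtain ⟨S₀, hS₀, hsub⟩ := hcover A hA hPA
      have hmono := Finset.single_le_sum
        (f := fun S => if S ⊆ A then p ^ A.card * (1 - p) ^ (E.card - A.card) else 0)
        (fun S _ => by split_ifs; exacts [hw A, le_refl 0]) hS₀
      simpa [hsub] using hmono
  refine step1.trans ?_
  rw [Finset.sum_comm]
  apply le_of_eq
  apply Finset.sum_congr rfl
  intro S hS
  exact sum_weights_superset E S (h𝒟 S hS) p

end Prob

lemma counting (n : ℕ) (hn : 1 ≤ n) (p : ℝ) (h0 : 0 ≤ p) (h1 : p ≤ 1)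
    (𝒟 : Finset (Finset (Sym2 (Fin n))))
    (hD : ∀ S ∈ 𝒟, S ⊆ completeEdges n ∧ S.Nonempty ∧ (support S).card ≤ 24 ∧
      15 * (support S).card ≤ 8 * S.card) :
    ∑ S ∈ 𝒟, p ^ S.card
      ≤ ∑ v ∈ Finset.Icc 2 24, (n : ℝ) ^ v * ((2:ℝ) ^ 576 * p ^ ((15 * v + 7) / 8)) := by
  classical
  set t : Finset (Finset (Fin n)) :=
    Finset.univ.powerset.filter (fun T => 2 ≤ T.card ∧ T.card ≤ 24) with ht
  have hmaps : ∀ S ∈ 𝒟, support S ∈ t := by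
    intro S hS
    obtain ⟨hSE, hSne, hs24, hdens⟩ := hD S hS
    rw [ht, Finset.mem_filter, Finset.mem_powerset]
    refine ⟨Finset.subset_univ _, ?_, hs24⟩
    obtain ⟨e, he⟩ := hSne
    have heC := hSE he
    rw [completeEdges, Finset.mem_filter] at heC
    refine Sym2.ind (f := fun e => e ∈ S → ¬ e.IsDiag → 2 ≤ (support S).card)
      ?_ e he heC.2
    intro a b he' hdiag
    have hab : a ≠ b := by simpa [Sym2.mk_isDiag_iff] using hdiag
    have ha : a ∈ support S := mem_support_of_mem he' (by simp)
    have hb : b ∈ support S := mem_support_of_mem he' (by simp)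
    exact Finset.one_lt_card.2 ⟨a, ha, b, hb, hab⟩
  rw [← Finset.sum_fiberwise_of_maps_to hmaps (fun S => p ^ S.card)]
  have hinner : ∀ T ∈ t, ∑ S ∈ 𝒟.filter (fun S => support S = T), p ^ S.card
      ≤ (2:ℝ) ^ 576 * p ^ ((15 * T.card + 7) / 8) := by
    intro T hT
    rw [ht, Finset.mem_filter] at hT
    set ET := (completeEdges n).filter (fun g => ∀ a ∈ g, a ∈ T) with hET
    have hETcard : ET.card ≤ 576 := by
      have hsub : ET ⊆ (T ×ˢ T).image (fun pr => s(pr.1, pr.2)) := by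
        intro g hg
        rw [hET, Finset.mem_filter] at hg
        revert hg
        refine Sym2.ind
          (f := fun g => (g ∈ completeEdges n ∧ ∀ a ∈ g, a ∈ T) →
            g ∈ (T ×ˢ T).image (fun pr => s(pr.1, pr.2))) ?_ g
        intro a b hg
        rw [Finset.mem_image]
        exact ⟨(a, b), Finset.mem_product.2 ⟨hg.2 a (by simp), hg.2 b (by simp)⟩, rfl⟩
      calc ET.card ≤ ((T ×ˢ T).image (fun pr => s(pr.1, pr.2))).card :=
            Finset.card_le_card hsub
        _ ≤ (T ×ˢ T).card := Finset.card_image_le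
        _ = T.card * T.card := Finset.card_product T T
        _ ≤ 24 * 24 := Nat.mul_le_mul hT.2.2 hT.2.2
        _ ≤ 576 := by norm_num
    have hfibsub : 𝒟.filter (fun S => support S = T) ⊆ ET.powerset := by
      intro S hS
      rw [Finset.mem_filter] at hS
      obtain ⟨hSE, -, -, -⟩ := hD S hS.1
      rw [Finset.mem_powerset]
      intro g hginS
      rw [hET, Finset.mem_filter]
      exact ⟨hSE hginS, fun a ha => hS.2 ▸ mem_support_of_mem hginS ha⟩
    have hfibcard : (𝒟.filter (fun S => support S = T)).card ≤ 2 ^ 576 := by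
      calc (𝒟.filter (fun S => support S = T)).card ≤ ET.powerset.card :=
            Finset.card_le_card hfibsub
        _ = 2 ^ ET.card := Finset.card_powerset ET
        _ ≤ 2 ^ 576 := Nat.pow_le_pow_right (by norm_num) hETcard
    have hterm : ∀ S ∈ 𝒟.filter (fun S => support S = T),
        p ^ S.card ≤ p ^ ((15 * T.card + 7) / 8) := by
      intro S hS
      rw [Finset.mem_filter] at hS
      obtain ⟨-, -, -, hdens⟩ := hD S hS.1
      apply pow_le_pow_of_le_one h0 h1
      rw [← hS.2]
      omega
    calc ∑ S ∈ 𝒟.filter (fun S => support S = T), p ^ S.card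
        ≤ (𝒟.filter (fun S => support S = T)).card • p ^ ((15 * T.card + 7) / 8) :=
          Finset.sum_le_card_nsmul _ _ _ hterm
      _ = ((𝒟.filter (fun S => support S = T)).card : ℝ) * p ^ ((15 * T.card + 7) / 8) :=
          nsmul_eq_mul _ _
      _ ≤ (2:ℝ) ^ 576 * p ^ ((15 * T.card + 7) / 8) := by
          apply mul_le_mul_of_nonneg_right _ (pow_nonneg h0 _)
          exact_mod_cast hfibcard
  refine (Finset.sum_le_sum hinner).trans ?_
  have hmaps2 : ∀ T ∈ t, T.card ∈ Finset.Icc 2 24 := by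
    intro T hT
    rw [ht, Finset.mem_filter] at hT
    rw [Finset.mem_Icc]
    exact hT.2
  rw [← Finset.sum_fiberwise_of_maps_to hmaps2
    (fun T => (2:ℝ) ^ 576 * p ^ ((15 * T.card + 7) / 8))]
  apply Finset.sum_le_sum
  intro v hv
  have hcongr : ∀ T ∈ t.filter (fun T => T.card = v),
      (2:ℝ) ^ 576 * p ^ ((15 * T.card + 7) / 8) = (2:ℝ) ^ 576 * p ^ ((15 * v + 7) / 8) := by
    intro T hT
    rw [(Finset.mem_filter.1 hT).2]
  rw [Finset.sum_congr rfl hcongr, Finset.sum_const]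
  have hcount : (t.filter (fun T => T.card = v)).card ≤ n ^ v := by
    have hsub : t.filter (fun T => T.card = v) ⊆ Finset.powersetCard v Finset.univ := by
      intro T hT
      rw [Finset.mem_powersetCard_univ]
      exact (Finset.mem_filter.1 hT).2
    calc (t.filter (fun T => T.card = v)).card
        ≤ (Finset.powersetCard v (Finset.univ : Finset (Fin n))).card :=
          Finset.card_le_card hsub
      _ = (Fintype.card (Fin n)).choose v := by
          rw [Finset.card_powersetCard, Finset.card_univ]
      _ = n.choose v := by rw [Fintype.card_fin]
      _ ≤ n ^ v := Nat.choose_le_pow n v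
  rw [nsmul_eq_mul]
  apply mul_le_mul_of_nonneg_right _ (by positivity)
  exact_mod_cast hcount

lemma main_bound (n : ℕ) (hn : 1 ≤ n) (p : ℝ) (h0 : 0 ≤ p) (h1 : p ≤ 1) :
    1 - edgeProb (completeEdges n) p
        (fun A => ∀ C ⊆ A, IsTriangleCollection C → MaxDensityLt C (15 / 8))
      ≤ ∑ v ∈ Finset.Icc 2 24,
          (2:ℝ) ^ 576 * (p * (n : ℝ) ^ (8 / 15 : ℝ)) ^ ((15 * v + 7) / 8) := by
  classical
  set 𝒟 : Finset (Finset (Sym2 (Fin n))) :=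
    (completeEdges n).powerset.filter
      (fun D => D.Nonempty ∧ (support D).card ≤ 24 ∧
        15 * (support D).card ≤ 8 * D.card) with h𝒟def
  have h𝒟props : ∀ S ∈ 𝒟, S ⊆ completeEdges n ∧ S.Nonempty ∧ (support S).card ≤ 24 ∧
      15 * (support S).card ≤ 8 * S.card := by
    intro S hS
    rw [h𝒟def, Finset.mem_filter, Finset.mem_powerset] at hS
    exact ⟨hS.1, hS.2.1, hS.2.2.1, hS.2.2.2⟩
  have hcover : ∀ A ∈ (completeEdges n).powerset,
      ¬ (∀ C ⊆ A, IsTriangleCollection C → MaxDensityLt C (15 / 8)) →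
      ∃ S ∈ 𝒟, S ⊆ A := by
    intro A hA hP
    push_neg at hP
    obtain ⟨C, hCA, hCcol, hCd⟩ := hP
    rw [MaxDensityLt] at hCd
    push_neg at hCd
    obtain ⟨D0, hD0C, hD0ne, hD0d⟩ := hCd
    obtain ⟨e, he⟩ := hD0ne
    have hsupp_pos : 0 < (support D0).card :=
      Finset.card_pos.2 ⟨e.out.1, mem_support_of_mem he (Sym2.out_fst_mem e)⟩
    have hnat : 15 * (support D0).card ≤ 8 * D0.card := by
      have hs : (0:ℝ) < ((support D0).card : ℝ) := by exact_mod_cast hsupp_pos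
      rw [le_div_iff₀ hs] at hD0d
      have hr : (15:ℝ) * (support D0).card ≤ 8 * D0.card := by linarith
      exact_mod_cast hr
    have hdenseC := lemA C hCcol D0 hD0C ⟨e, he⟩ hnat
    obtain ⟨D, hDC, hDne, hD24, hDd⟩ := lemB C hCcol ⟨e, hD0C he⟩ hdenseC
    refine ⟨D, ?_, hDC.trans hCA⟩
    rw [h𝒟def, Finset.mem_filter, Finset.mem_powerset]
    exact ⟨(hDC.trans hCA).trans (Finset.mem_powerset.1 hA), hDne, hD24, hDd⟩
  have step1 := one_sub_edgeProb_le (completeEdges n) p h0 h1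
    (fun A => ∀ C ⊆ A, IsTriangleCollection C → MaxDensityLt C (15 / 8)) 𝒟
    (fun S hS => (h𝒟props S hS).1) hcover
  refine step1.trans ?_
  refine (counting n hn p h0 h1 𝒟 h𝒟props).trans ?_
  apply Finset.sum_le_sum
  intro v _
  have hnn : (1:ℝ) ≤ (n:ℝ) := by exact_mod_cast hn
  have hq : 15 * v ≤ 8 * ((15 * v + 7) / 8) := by omega
  have key : (n:ℝ) ^ v * p ^ ((15 * v + 7) / 8)
      ≤ (p * (n : ℝ) ^ (8 / 15 : ℝ)) ^ ((15 * v + 7) / 8) := by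
    rw [mul_pow]
    have h2 : (n:ℝ) ^ v ≤ ((n:ℝ) ^ (8 / 15 : ℝ)) ^ ((15 * v + 7) / 8) := by
      rw [← Real.rpow_natCast ((n:ℝ) ^ (8 / 15 : ℝ)) ((15 * v + 7) / 8),
        ← Real.rpow_mul (by positivity), ← Real.rpow_natCast (n:ℝ) v]
      apply Real.rpow_le_rpow_of_exponent_le hnn
      have : (15 * v : ℝ) ≤ 8 * (((15 * v + 7) / 8 : ℕ) : ℝ) := by exact_mod_cast hq
      linarith
    calc (n:ℝ) ^ v * p ^ ((15 * v + 7) / 8)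
        ≤ ((n:ℝ) ^ (8 / 15 : ℝ)) ^ ((15 * v + 7) / 8) * p ^ ((15 * v + 7) / 8) :=
          mul_le_mul_of_nonneg_right h2 (pow_nonneg h0 _)
      _ = p ^ ((15 * v + 7) / 8) * ((n:ℝ) ^ (8 / 15 : ℝ)) ^ ((15 * v + 7) / 8) :=
          mul_comm _ _
  calc (n : ℝ) ^ v * ((2:ℝ) ^ 576 * p ^ ((15 * v + 7) / 8))
      = (2:ℝ) ^ 576 * ((n : ℝ) ^ v * p ^ ((15 * v + 7) / 8)) := by ring
    _ ≤ (2:ℝ) ^ 576 * (p * (n : ℝ) ^ (8 / 15 : ℝ)) ^ ((15 * v + 7) / 8) :=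
        mul_le_mul_of_nonneg_left key (by positivity)


end AuxProof

/-- If `p ≪ n^{-8/15}`, then a.a.s. every triangle collection `C` in
`G ∼ G_{n,p}` satisfies `m(C) < 15/8`. -/
theorem collections_sparse (p : ℕ → ℝ) (hp0 : ∀ n, 0 ≤ p n) (hp1 : ∀ n, p n ≤ 1)
    (h : Filter.Tendsto (fun n : ℕ => p n * (n : ℝ) ^ (8 / 15 : ℝ))
      Filter.atTop (nhds 0)) :
    Filter.Tendsto (fun n : ℕ =>
        edgeProb (completeEdges n) (p n)
          (fun A => ∀ C ⊆ A, IsTriangleCollection C → MaxDensityLt C (15 / 8)))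
      Filter.atTop (nhds 1) := by

  classical
  set B : ℕ → ℝ := fun n => ∑ v ∈ Finset.Icc 2 24,
    (2:ℝ) ^ 576 * (p n * (n : ℝ) ^ (8 / 15 : ℝ)) ^ ((15 * v + 7) / 8) with hBdef
  have hB : Filter.Tendsto B Filter.atTop (nhds 0) := by
    rw [hBdef]
    have : (0:ℝ) = ∑ v ∈ Finset.Icc 2 24, (0:ℝ) := by simp
    rw [this]
    apply Filter.Tendsto.congr (f₁ := fun n => ∑ v ∈ Finset.Icc 2 24,
      (2:ℝ) ^ 576 * (p n * (n : ℝ) ^ (8 / 15 : ℝ)) ^ ((15 * v + 7) / 8)) (fun n => rfl)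
    apply tendsto_finset_sum
    intro v hv
    have hq : (15 * v + 7) / 8 ≠ 0 := by
      rw [Finset.mem_Icc] at hv
      omega
    have hpow := h.pow ((15 * v + 7) / 8)
    rw [zero_pow hq] at hpow
    have := hpow.const_mul ((2:ℝ) ^ 576)
    simpa using this
  apply tendsto_of_tendsto_of_tendsto_of_le_of_le' (g := fun n => 1 - B n)
    (h := fun _ : ℕ => (1:ℝ))
  · have := (tendsto_const_nhds (x := (1:ℝ)) (f := Filter.atTop (α := ℕ))).sub hB
    simpa using this
  · exact tendsto_const_nhds
  · filter_upwards [Filter.eventually_ge_atTop 1] with n hn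
    have := main_bound n hn (p n) (hp0 n) (hp1 n)
    rw [hBdef]
    linarith
  · exact Filter.Eventually.of_forall
      (fun n => edgeProb_le_one _ _ (hp0 n) (hp1 n) _)


end TournamentGame
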